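/- Let B be an n-dimensional Brownian motion with Cov(B^i_t, B^j_t) = t·σ_{ij}, and let 0 ≤ x_1 ≤ ... ≤ x_n ≤ 1 be closing-time fractions. Define closing-time returns X^i_t = B^i_{t+x_i} − B^i_{t−1+x_i} for t ∈ ℤ. Then Cov(X^i_t, X^j_t) = σ_{ij}·(1 − |x_i − x_j|). -/

import Mathlib

open MeasureTheory

/-- Covariance of two real random variables under measure `μ`. -/
noncomputable def cov {Ω : Type} [MeasurableSpace Ω] (μ : Measure Ω) (X Y : Ω → ℝ) : ℝ :=
  ∫ ω, (X ω - ∫ ω', X ω' ∂μ) * (Y ω - ∫ ω', Y ω' ∂μ) ∂μ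

lemma cov_comm {Ω : Type} [MeasurableSpace Ω] (μ : Measure Ω) (X Y : Ω → ℝ) :
    cov μ X Y = cov μ Y X := by
  unfold cov; simp_rw [mul_comm]

lemma integrable_mul_of_L2 {Ω : Type} [MeasurableSpace Ω] {μ : Measure Ω} {f g : Ω → ℝ}
    (hf : MemLp f 2 μ) (hg : MemLp g 2 μ) : Integrable (fun ω => f ω * g ω) μ :=
  memLp_one_iff_integrable.mp
    (hg.smul hf (r := 1) (hpqr := ⟨by simp [ENNReal.inv_two_add_inv_two]⟩))

lemma cov_add_left {Ω : Type} [MeasurableSpace Ω] (μ : Measure Ω) [IsProbabilityMeasure μ]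
    {X X' Y : Ω → ℝ} (hX : MemLp X 2 μ) (hX' : MemLp X' 2 μ) (hY : MemLp Y 2 μ) :
    cov μ (fun ω => X ω + X' ω) Y = cov μ X Y + cov μ X' Y := by
  have hXi : Integrable X μ := hX.integrable one_le_two
  have hX'i : Integrable X' μ := hX'.integrable one_le_two
  have hmean : (∫ ω', X ω' + X' ω' ∂μ) = (∫ ω', X ω' ∂μ) + ∫ ω', X' ω' ∂μ :=
    integral_add hXi hX'i
  have h1 : Integrable (fun ω => (X ω - ∫ ω', X ω' ∂μ) * (Y ω - ∫ ω', Y ω' ∂μ)) μ :=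
    integrable_mul_of_L2 (hX.sub (memLp_const _)) (hY.sub (memLp_const _))
  have h2 : Integrable (fun ω => (X' ω - ∫ ω', X' ω' ∂μ) * (Y ω - ∫ ω', Y ω' ∂μ)) μ :=
    integrable_mul_of_L2 (hX'.sub (memLp_const _)) (hY.sub (memLp_const _))
  unfold cov
  rw [hmean, ← integral_add h1 h2]
  congr 1
  ext ω
  ring

lemma cov_add_right {Ω : Type} [MeasurableSpace Ω] (μ : Measure Ω) [IsProbabilityMeasure μ]
    {X Y Y' : Ω → ℝ} (hX : MemLp X 2 μ) (hY : MemLp Y 2 μ) (hY' : MemLp Y' 2 μ) :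
    cov μ X (fun ω => Y ω + Y' ω) = cov μ X Y + cov μ X Y' := by
  rw [cov_comm, cov_add_left μ hY hY' hX, cov_comm μ Y X, cov_comm μ Y' X]

lemma cov_expand {Ω : Type} [MeasurableSpace Ω] (μ : Measure Ω) [IsProbabilityMeasure μ]
    {X X' Y Y' : Ω → ℝ} (hX : MemLp X 2 μ) (hX' : MemLp X' 2 μ)
    (hY : MemLp Y 2 μ) (hY' : MemLp Y' 2 μ) :
    cov μ (fun ω => X ω + X' ω) (fun ω => Y ω + Y' ω)
      = cov μ X Y + cov μ X Y' + cov μ X' Y + cov μ X' Y' := by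
  have hYY' : MemLp (fun ω => Y ω + Y' ω) 2 μ := hY.add hY'
  rw [cov_add_left μ hX hX' hYY', cov_add_right μ hX hY hY', cov_add_right μ hX' hY hY']
  ring

/-- Lag-zero covariance of closing-time returns in the Brownian model:
`Cov(Xⁱₜ, Xʲₜ) = σᵢⱼ (1 - |xᵢ - xⱼ|)`. -/
theorem closing_time_lag_zero_covariance
    {Ω : Type} [MeasurableSpace Ω] (μ : Measure Ω) [IsProbabilityMeasure μ] {n : ℕ}
    (B : ℝ → Ω → Fin n → ℝ) (S : Matrix (Fin n) (Fin n) ℝ) (x : Fin n → ℝ)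
    (hx0 : ∀ i, 0 ≤ x i) (hx1 : ∀ i, x i ≤ 1)
    (hmono : ∀ i j : Fin n, i ≤ j → x i ≤ x j)
    (hL2 : ∀ (t : ℝ) (i : Fin n), MemLp (fun ω => B t ω i) 2 μ)
    (hsame : ∀ s t : ℝ, s ≤ t → ∀ i j : Fin n,
      cov μ (fun ω => B t ω i - B s ω i) (fun ω => B t ω j - B s ω j) = (t - s) * S i j)
    (hdisj : ∀ a b c d : ℝ, a ≤ b → b ≤ c → c ≤ d → ∀ i j : Fin n,
      cov μ (fun ω => B b ω i - B a ω i) (fun ω => B d ω j - B c ω j) = 0 ∧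
      cov μ (fun ω => B d ω i - B c ω i) (fun ω => B b ω j - B a ω j) = 0) :
    ∀ (t : ℤ) (i j : Fin n),
      cov μ (fun ω => B ((t : ℝ) + x i) ω i - B ((t : ℝ) - 1 + x i) ω i)
            (fun ω => B ((t : ℝ) + x j) ω j - B ((t : ℝ) - 1 + x j) ω j)
        = S i j * (1 - |x i - x j|) := by
  have hSsymm : ∀ i j : Fin n, S i j = S j i := by
    intro i j
    have h1 := hsame 0 1 zero_le_one i j
    have h2 := hsame 0 1 zero_le_one j i
    rw [cov_comm] at h1
    rw [h2] at h1
    simpa using h1.symm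
  -- key computation assuming x i ≤ x j
  have key : ∀ (t : ℝ) (i j : Fin n), x i ≤ x j →
      cov μ (fun ω => B (t + x i) ω i - B (t - 1 + x i) ω i)
            (fun ω => B (t + x j) ω j - B (t - 1 + x j) ω j)
        = S i j * (1 - (x j - x i)) := by
    intro t i j hxij
    have hd2 : MemLp (fun ω => B (t - 1 + x j) ω i - B (t - 1 + x i) ω i) 2 μ :=
      (hL2 _ i).sub (hL2 _ i)
    have hd1 : MemLp (fun ω => B (t + x i) ω i - B (t - 1 + x j) ω i) 2 μ :=
      (hL2 _ i).sub (hL2 _ i)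
    have he1 : MemLp (fun ω => B (t + x i) ω j - B (t - 1 + x j) ω j) 2 μ :=
      (hL2 _ j).sub (hL2 _ j)
    have he2 : MemLp (fun ω => B (t + x j) ω j - B (t + x i) ω j) 2 μ :=
      (hL2 _ j).sub (hL2 _ j)
    have o1 : t - 1 + x i ≤ t - 1 + x j := by linarith
    have o2 : t - 1 + x j ≤ t + x i := by have := hx1 j; have := hx0 i; linarith
    have o3 : t + x i ≤ t + x j := by linarith
    have c21 : cov μ (fun ω => B (t - 1 + x j) ω i - B (t - 1 + x i) ω i)
        (fun ω => B (t + x i) ω j - B (t - 1 + x j) ω j) = 0 :=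
      (hdisj _ _ _ _ o1 le_rfl o2 i j).1
    have c22 : cov μ (fun ω => B (t - 1 + x j) ω i - B (t - 1 + x i) ω i)
        (fun ω => B (t + x j) ω j - B (t + x i) ω j) = 0 :=
      (hdisj _ _ _ _ o1 o2 o3 i j).1
    have c11 : cov μ (fun ω => B (t + x i) ω i - B (t - 1 + x j) ω i)
        (fun ω => B (t + x i) ω j - B (t - 1 + x j) ω j)
        = (t + x i - (t - 1 + x j)) * S i j := hsame _ _ o2 i j
    have c12 : cov μ (fun ω => B (t + x i) ω i - B (t - 1 + x j) ω i)
        (fun ω => B (t + x j) ω j - B (t + x i) ω j) = 0 :=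
      (hdisj _ _ _ _ o2 le_rfl o3 i j).1
    have decompL : (fun ω => B (t + x i) ω i - B (t - 1 + x i) ω i)
        = fun ω => (B (t - 1 + x j) ω i - B (t - 1 + x i) ω i)
            + (B (t + x i) ω i - B (t - 1 + x j) ω i) := by
      funext ω; ring
    have decompR : (fun ω => B (t + x j) ω j - B (t - 1 + x j) ω j)
        = fun ω => (B (t + x i) ω j - B (t - 1 + x j) ω j)
            + (B (t + x j) ω j - B (t + x i) ω j) := by
      funext ω; ring
    rw [decompL, decompR, cov_expand μ hd2 hd1 he1 he2, c21, c22, c11, c12]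
    ring
  intro t i j
  rcases le_total (x i) (x j) with h | h
  · rw [key (t : ℝ) i j h, abs_sub_comm, abs_of_nonneg (sub_nonneg.mpr h)]
  · rw [cov_comm, key (t : ℝ) j i h, abs_of_nonneg (sub_nonneg.mpr h), hSsymm i j]
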